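/- Blow-ups at interior wall points for smooth first-layer norms: let N be a norm on ℝⁿ × ℝⁿ, λ > 0, and let p = (a, b, c) with N(a,b) = 1 and λ√|c| < 1. If N is Fréchet differentiable at (a,b) with derivative D, then for every q = (x,y,z) ∈ H_{2n+1}(ℝ), lim_{t→0⁺} (‖p·δ_t q‖ − 1)/t = D(x,y); in particular the blow-up function is linear in the first-layer coordinates and independent of z. -/

import Mathlib

open Filter Metric Real

noncomputable section

/-- The higher Heisenberg group `H_{2n+1}(ℝ)` as `ℝⁿ × ℝⁿ × ℝ`. -/
abbrev Heis (n : ℕ) := (Fin n → ℝ) × (Fin n → ℝ) × ℝ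

/-- Standard inner product on `ℝⁿ`. -/
def dotR {n : ℕ} (x y : Fin n → ℝ) : ℝ := ∑ i, x i * y i

/-- Heisenberg group product. -/
def Hmul {n : ℕ} (p q : Heis n) : Heis n :=
  (p.1 + q.1, p.2.1 + q.2.1,
    p.2.2 + q.2.2 + (1 / 2) * (dotR p.1 q.2.1 - dotR q.1 p.2.1))

/-- Heisenberg dilations `δ_t(x,y,z) = (tx, ty, t²z)`. -/
def Hdil {n : ℕ} (t : ℝ) (p : Heis n) : Heis n :=
  (t • p.1, t • p.2.1, t ^ 2 * p.2.2)

/-- The layered sup quasi-norm `max(N(x,y), λ√|z|)`. -/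
def layeredNorm {n : ℕ} (N : (Fin n → ℝ) × (Fin n → ℝ) → ℝ) (lam : ℝ) (p : Heis n) : ℝ :=
  max (N (p.1, p.2.1)) (lam * Real.sqrt |p.2.2|)

/-- **Blow-ups at interior wall points for smooth first-layer norms.** If `N` is Fréchet
differentiable at `(a,b)` with derivative `D`, `N(a,b) = 1` and `λ√|c| < 1`, then the
blow-up of the layered sup norm at `p = (a,b,c)` is `D(x,y)`: linear in the first-layer
coordinates and independent of `z`. -/
theorem blowup_wall_smooth (n : ℕ) (N : (Fin n → ℝ) × (Fin n → ℝ) → ℝ)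
    (hN_add : ∀ u v, N (u + v) ≤ N u + N v)
    (hN_smul : ∀ (c : ℝ) u, N (c • u) = |c| * N u)
    (hN_zero : ∀ u, N u = 0 ↔ u = 0)
    (lam : ℝ) (hlam : 0 < lam)
    (a b : Fin n → ℝ) (c : ℝ) (hab : N (a, b) = 1) (hc : lam * Real.sqrt |c| < 1)
    (D : ((Fin n → ℝ) × (Fin n → ℝ)) →L[ℝ] ℝ) (hD : HasFDerivAt N D (a, b))
    (x y : Fin n → ℝ) (z : ℝ) :
    Tendsto
      (fun t : ℝ => (layeredNorm N lam (Hmul (a, b, c) (Hdil t (x, y, z))) - 1) / t)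
      (nhdsWithin 0 (Set.Ioi 0)) (nhds (D (x, y))) := by
  set φ : ℝ → (Fin n → ℝ) × (Fin n → ℝ) := fun t => (a, b) + t • (x, y) with hφdef
  have hφ : HasDerivAt φ (x, y) 0 := by
    have h := ((hasDerivAt_id (0:ℝ)).smul_const ((x, y) : (Fin n → ℝ) × (Fin n → ℝ))).const_add
      ((a, b) : (Fin n → ℝ) × (Fin n → ℝ))
    rw [one_smul] at h; exact h
  have hf : HasDerivAt (fun t => N (φ t)) (D (x, y)) 0 := by
    have hD0 : HasFDerivAt N D (φ 0) := by simpa [hφdef] using hD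
    exact hD0.comp_hasDerivAt 0 hφ
  -- g function
  set g : ℝ → ℝ := fun t => lam * Real.sqrt |c + t ^ 2 * z + t * ((1/2) * (dotR a y - dotR x b))|
    with hgdef
  have hgcont : ContinuousAt g 0 := by
    fun_prop
  have hfcont : ContinuousAt (fun t => N (φ t)) 0 := hf.continuousAt
  have hgt : ∀ᶠ t in nhds (0:ℝ), g t < N (φ t) := by
    have hsub : ContinuousAt (fun t => N (φ t) - g t) 0 := hfcont.sub hgcont
    have h0 : (0:ℝ) < N (φ 0) - g 0 := by
      simp only [hφdef, hgdef]
      simp [hab]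
      linarith [hc]
    filter_upwards [hsub.eventually (eventually_gt_nhds h0)] with t ht
    linarith
  have key : ∀ᶠ t in nhdsWithin (0:ℝ) (Set.Ioi 0),
      (layeredNorm N lam (Hmul (a, b, c) (Hdil t (x, y, z))) - 1) / t
        = (N (φ t) - N (φ 0)) / (t - 0) := by
    filter_upwards [nhdsWithin_le_nhds hgt] with t ht
    have hmax : layeredNorm N lam (Hmul (a, b, c) (Hdil t (x, y, z))) = N (φ t) := by
      unfold layeredNorm Hmul Hdil
      simp only [hφdef]
      have h1 : ((a, b) : (Fin n → ℝ) × (Fin n → ℝ)) + t • (x, y) = (a + t • x, b + t • y) := rfl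
      have h2 : dotR a (t • y) = t * dotR a y := by
        simp [dotR, Finset.mul_sum, mul_comm, mul_left_comm, mul_assoc]
      have h3 : dotR (t • x) b = t * dotR x b := by
        simp [dotR, Finset.mul_sum, mul_comm, mul_left_comm, mul_assoc]
      rw [max_eq_left]
      have := ht
      rw [hgdef] at this
      simp only [h1] at this ⊢
      calc lam * Real.sqrt |c + t ^ 2 * z + 1 / 2 * (dotR a (t • y) - dotR (t • x) b)|
          = g t := by rw [hgdef]; rw [h2, h3]; ring_nf
        _ ≤ N (a + t • x, b + t • y) := le_of_lt (by simpa [hφdef] using ht)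
    rw [hmax]
    simp [hφdef, hab]
  refine Tendsto.congr' (key.mono fun t ht => ht.symm) ?_
  have := hasDerivAt_iff_tendsto_slope.mp hf
  have h2 : Tendsto (slope (fun t => N (φ t)) 0) (nhdsWithin 0 (Set.Ioi 0)) (nhds (D (x, y))) :=
    this.mono_left (nhdsWithin_mono 0 (fun t ht => ne_of_gt ht))
  refine h2.congr fun t => ?_
  simp [slope_def_field, div_eq_div_iff]
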